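/- Let Z and Z' be 3-tails of a nodal curve C with Z ∧ Z' nonempty and Z ∪ Z' ≠ C. If exactly two of the three edges of Term_{Z'} lie in Z (i.e. have both endpoints in Z), then k_{Z∪Z'} ∈ {2,3}. -/
import Mathlib


open Set

/- Dual multigraph model of a nodal curve: vertices `V` are irreducible
components, edges `E` are nodes, with endpoint maps `s t : E → V`. -/

/-- The set of terminal points (edges of the cut) of a vertex subset `Z`. -/
def TermPts {V E : Type} (s t : E → V) (Z : Set V) : Set E :=
  {e | (s e ∈ Z ∧ t e ∉ Z) ∨ (t e ∈ Z ∧ s e ∉ Z)}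

/-- A subcurve is a nonempty proper subset of the components. -/
def Subcurve {V : Type} (Z : Set V) : Prop := Z.Nonempty ∧ Z ≠ Set.univ

/-- Connectivity of the induced sub-multigraph on `Z`. -/
def ConnOn {V E : Type} (s t : E → V) (Z : Set V) : Prop :=
  ∀ x ∈ Z, ∀ y ∈ Z,
    Relation.ReflTransGen
      (fun a b => a ∈ Z ∧ b ∈ Z ∧ ∃ e, (s e = a ∧ t e = b) ∨ (s e = b ∧ t e = a)) x y

/-- A tail is a subcurve with both sides connected. -/
def IsTail {V E : Type} (s t : E → V) (Z : Set V) : Prop :=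
  Subcurve Z ∧ ConnOn s t Z ∧ ConnOn s t Zᶜ

/-- `k_Z`, the number of terminal points of `Z`. -/
noncomputable def kcut {V E : Type} (s t : E → V) (Z : Set V) : ℕ :=
  (TermPts s t Z).ncard

/-- The pair `(Z, Z')` is free if the edge cuts are disjoint. -/
def FreePair {V E : Type} (s t : E → V) (Z Z' : Set V) : Prop :=
  TermPts s t Z ∩ TermPts s t Z' = ∅

/-- The pair `(Z, Z')` is perfect. -/
def PerfectPair {V : Type} (Z Z' : Set V) : Prop :=
  Z ⊆ Z' ∨ Z' ⊆ Z ∨ Zᶜ ⊆ Z' ∨ Z' ⊆ Zᶜ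

def edg {V E : Type} (s t : E → V) (P Q : Set V) : Set E :=
  {e | (s e ∈ P ∧ t e ∈ Q) ∨ (s e ∈ Q ∧ t e ∈ P)}

lemma cross_edge {V E : Type} (s t : E → V) {U X : Set V} (hU : ConnOn s t U)
    {x y : V} (hx : x ∈ U) (hy : y ∈ U) (hxX : x ∈ X) (hyX : y ∉ X) :
    ∃ e, s e ∈ U ∧ t e ∈ U ∧ ((s e ∈ X ∧ t e ∉ X) ∨ (t e ∈ X ∧ s e ∉ X)) := by
  have h := hU x hx y hy
  clear hy
  revert hyX
  induction h with
  | refl => intro h; exact absurd hxX h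
  | @tail b c h1 h2 ih =>
    intro hcX
    obtain ⟨hbU, hcU, e, he⟩ := h2
    by_cases hbX : b ∈ X
    · refine ⟨e, ?_⟩
      rcases he with ⟨hs, ht⟩ | ⟨hs, ht⟩ <;> subst hs <;> subst ht <;> tauto
    · exact ih hbX

lemma ncard2 {E : Type} [Fintype E] {a b : Set E} (hab : a ∩ b = ∅) :
    (a ∪ b).ncard = a.ncard + b.ncard := by
  rw [Set.ncard_union_eq (Set.disjoint_iff_inter_eq_empty.mpr hab) a.toFinite b.toFinite]

lemma ncard3 {E : Type} [Fintype E] {a b c : Set E}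
    (hab : a ∩ b = ∅) (hac : a ∩ c = ∅) (hbc : b ∩ c = ∅) :
    (a ∪ b ∪ c).ncard = a.ncard + b.ncard + c.ncard := by
  rw [ncard2, ncard2 hab]
  rw [Set.union_inter_distrib_right, hac, hbc, Set.union_empty]

lemma ncard4 {E : Type} [Fintype E] {a b c d : Set E}
    (hab : a ∩ b = ∅) (hac : a ∩ c = ∅) (had : a ∩ d = ∅)
    (hbc : b ∩ c = ∅) (hbd : b ∩ d = ∅) (hcd : c ∩ d = ∅) :
    (a ∪ b ∪ c ∪ d).ncard = a.ncard + b.ncard + c.ncard + d.ncard := by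
  rw [ncard2, ncard3 hab hac hbc]
  rw [Set.union_inter_distrib_right, Set.union_inter_distrib_right, had, hbd, hcd]
  simp

lemma aux_hT1 {V E : Type} [Fintype E] (s t : E → V) (Z Z' : Set V) :
    TermPts s t Z = (edg s t (Z \ Z') (Z' \ Z)) ∪ (edg s t (Z \ Z') ((Z ∪ Z')ᶜ)) ∪ (edg s t (Z ∩ Z') (Z' \ Z)) ∪ (edg s t (Z ∩ Z') ((Z ∪ Z')ᶜ)) := by
    ext e
    simp only [TermPts, edg, mem_setOf_eq, mem_union,
      mem_diff, mem_inter_iff, mem_compl_iff]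
    by_cases h1 : s e ∈ Z <;> by_cases h2 : s e ∈ Z' <;>
      by_cases h3 : t e ∈ Z <;> by_cases h4 : t e ∈ Z' <;> simp_all

lemma aux_hT2 {V E : Type} [Fintype E] (s t : E → V) (Z Z' : Set V) :
    TermPts s t Z' = (edg s t (Z \ Z') (Z ∩ Z')) ∪ (edg s t (Z \ Z') (Z' \ Z)) ∪ (edg s t (Z ∩ Z') ((Z ∪ Z')ᶜ)) ∪ (edg s t (Z' \ Z) ((Z ∪ Z')ᶜ)) := by
    ext e
    simp only [TermPts, edg, mem_setOf_eq, mem_union,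
      mem_diff, mem_inter_iff, mem_compl_iff]
    by_cases h1 : s e ∈ Z <;> by_cases h2 : s e ∈ Z' <;>
      by_cases h3 : t e ∈ Z <;> by_cases h4 : t e ∈ Z' <;> simp_all

lemma aux_hT3 {V E : Type} [Fintype E] (s t : E → V) (Z Z' : Set V) :
    TermPts s t (Z ∪ Z') = (edg s t (Z \ Z') ((Z ∪ Z')ᶜ)) ∪ (edg s t (Z ∩ Z') ((Z ∪ Z')ᶜ)) ∪ (edg s t (Z' \ Z) ((Z ∪ Z')ᶜ)) := by
    ext e
    simp only [TermPts, edg, mem_setOf_eq, mem_union,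
      mem_diff, mem_inter_iff, mem_compl_iff]
    by_cases h1 : s e ∈ Z <;> by_cases h2 : s e ∈ Z' <;>
      by_cases h3 : t e ∈ Z <;> by_cases h4 : t e ∈ Z' <;> simp_all

lemma aux_hT4 {V E : Type} [Fintype E] (s t : E → V) (Z Z' : Set V) :
    {e ∈ TermPts s t Z' | s e ∈ Z ∧ t e ∈ Z} = (edg s t (Z \ Z') (Z ∩ Z')) := by
    ext e
    simp only [TermPts, edg, mem_setOf_eq, mem_diff, mem_inter_iff]
    by_cases h1 : s e ∈ Z <;> by_cases h2 : s e ∈ Z' <;>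
      by_cases h3 : t e ∈ Z <;> by_cases h4 : t e ∈ Z' <;> simp_all

lemma aux_d1 {V E : Type} [Fintype E] (s t : E → V) (Z Z' : Set V) :
    (edg s t (Z \ Z') (Z' \ Z)) ∩ (edg s t (Z \ Z') ((Z ∪ Z')ᶜ)) = ∅ := by
    ext e
    simp only [edg, mem_inter_iff, mem_setOf_eq, mem_diff, mem_compl_iff,
      mem_union, mem_empty_iff_false, iff_false]
    by_cases h1 : s e ∈ Z <;> by_cases h2 : s e ∈ Z' <;>
      by_cases h3 : t e ∈ Z <;> by_cases h4 : t e ∈ Z' <;> simp_all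

lemma aux_d2 {V E : Type} [Fintype E] (s t : E → V) (Z Z' : Set V) :
    (edg s t (Z \ Z') (Z' \ Z)) ∩ (edg s t (Z ∩ Z') (Z' \ Z)) = ∅ := by
    ext e
    simp only [edg, mem_inter_iff, mem_setOf_eq, mem_diff, mem_inter_iff,
      mem_empty_iff_false, iff_false]
    by_cases h1 : s e ∈ Z <;> by_cases h2 : s e ∈ Z' <;>
      by_cases h3 : t e ∈ Z <;> by_cases h4 : t e ∈ Z' <;> simp_all

lemma aux_d3 {V E : Type} [Fintype E] (s t : E → V) (Z Z' : Set V) :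
    (edg s t (Z \ Z') (Z' \ Z)) ∩ (edg s t (Z ∩ Z') ((Z ∪ Z')ᶜ)) = ∅ := by
    ext e
    simp only [edg, mem_inter_iff, mem_setOf_eq, mem_diff, mem_inter_iff,
      mem_compl_iff, mem_union, mem_empty_iff_false, iff_false]
    by_cases h1 : s e ∈ Z <;> by_cases h2 : s e ∈ Z' <;>
      by_cases h3 : t e ∈ Z <;> by_cases h4 : t e ∈ Z' <;> simp_all

lemma aux_d4 {V E : Type} [Fintype E] (s t : E → V) (Z Z' : Set V) :
    (edg s t (Z \ Z') ((Z ∪ Z')ᶜ)) ∩ (edg s t (Z ∩ Z') (Z' \ Z)) = ∅ := by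
    ext e
    simp only [edg, mem_inter_iff, mem_setOf_eq, mem_diff, mem_inter_iff,
      mem_compl_iff, mem_union, mem_empty_iff_false, iff_false]
    by_cases h1 : s e ∈ Z <;> by_cases h2 : s e ∈ Z' <;>
      by_cases h3 : t e ∈ Z <;> by_cases h4 : t e ∈ Z' <;> simp_all

lemma aux_d5 {V E : Type} [Fintype E] (s t : E → V) (Z Z' : Set V) :
    (edg s t (Z \ Z') ((Z ∪ Z')ᶜ)) ∩ (edg s t (Z ∩ Z') ((Z ∪ Z')ᶜ)) = ∅ := by
    ext e
    simp only [edg, mem_inter_iff, mem_setOf_eq, mem_diff, mem_inter_iff,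
      mem_compl_iff, mem_union, mem_empty_iff_false, iff_false]
    by_cases h1 : s e ∈ Z <;> by_cases h2 : s e ∈ Z' <;>
      by_cases h3 : t e ∈ Z <;> by_cases h4 : t e ∈ Z' <;> simp_all

lemma aux_d6 {V E : Type} [Fintype E] (s t : E → V) (Z Z' : Set V) :
    (edg s t (Z ∩ Z') (Z' \ Z)) ∩ (edg s t (Z ∩ Z') ((Z ∪ Z')ᶜ)) = ∅ := by
    ext e
    simp only [edg, mem_inter_iff, mem_setOf_eq, mem_diff, mem_inter_iff,
      mem_compl_iff, mem_union, mem_empty_iff_false, iff_false]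
    by_cases h1 : s e ∈ Z <;> by_cases h2 : s e ∈ Z' <;>
      by_cases h3 : t e ∈ Z <;> by_cases h4 : t e ∈ Z' <;> simp_all

lemma aux_d7 {V E : Type} [Fintype E] (s t : E → V) (Z Z' : Set V) :
    (edg s t (Z \ Z') (Z ∩ Z')) ∩ (edg s t (Z \ Z') (Z' \ Z)) = ∅ := by
    ext e
    simp only [edg, mem_inter_iff, mem_setOf_eq, mem_diff, mem_inter_iff,
      mem_empty_iff_false, iff_false]
    by_cases h1 : s e ∈ Z <;> by_cases h2 : s e ∈ Z' <;>
      by_cases h3 : t e ∈ Z <;> by_cases h4 : t e ∈ Z' <;> simp_all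

lemma aux_d8 {V E : Type} [Fintype E] (s t : E → V) (Z Z' : Set V) :
    (edg s t (Z \ Z') (Z ∩ Z')) ∩ (edg s t (Z ∩ Z') ((Z ∪ Z')ᶜ)) = ∅ := by
    ext e
    simp only [edg, mem_inter_iff, mem_setOf_eq, mem_diff, mem_inter_iff,
      mem_compl_iff, mem_union, mem_empty_iff_false, iff_false]
    by_cases h1 : s e ∈ Z <;> by_cases h2 : s e ∈ Z' <;>
      by_cases h3 : t e ∈ Z <;> by_cases h4 : t e ∈ Z' <;> simp_all

lemma aux_d9 {V E : Type} [Fintype E] (s t : E → V) (Z Z' : Set V) :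
    (edg s t (Z \ Z') (Z ∩ Z')) ∩ (edg s t (Z' \ Z) ((Z ∪ Z')ᶜ)) = ∅ := by
    ext e
    simp only [edg, mem_inter_iff, mem_setOf_eq, mem_diff, mem_inter_iff,
      mem_compl_iff, mem_union, mem_empty_iff_false, iff_false]
    by_cases h1 : s e ∈ Z <;> by_cases h2 : s e ∈ Z' <;>
      by_cases h3 : t e ∈ Z <;> by_cases h4 : t e ∈ Z' <;> simp_all

lemma aux_d10 {V E : Type} [Fintype E] (s t : E → V) (Z Z' : Set V) :
    (edg s t (Z \ Z') (Z' \ Z)) ∩ (edg s t (Z' \ Z) ((Z ∪ Z')ᶜ)) = ∅ := by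
    ext e
    simp only [edg, mem_inter_iff, mem_setOf_eq, mem_diff,
      mem_compl_iff, mem_union, mem_empty_iff_false, iff_false]
    by_cases h1 : s e ∈ Z <;> by_cases h2 : s e ∈ Z' <;>
      by_cases h3 : t e ∈ Z <;> by_cases h4 : t e ∈ Z' <;> simp_all

lemma aux_d11 {V E : Type} [Fintype E] (s t : E → V) (Z Z' : Set V) :
    (edg s t (Z ∩ Z') ((Z ∪ Z')ᶜ)) ∩ (edg s t (Z' \ Z) ((Z ∪ Z')ᶜ)) = ∅ := by
    ext e
    simp only [edg, mem_inter_iff, mem_setOf_eq, mem_diff, mem_inter_iff,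
      mem_compl_iff, mem_union, mem_empty_iff_false, iff_false]
    by_cases h1 : s e ∈ Z <;> by_cases h2 : s e ∈ Z' <;>
      by_cases h3 : t e ∈ Z <;> by_cases h4 : t e ∈ Z' <;> simp_all

lemma aux_d12 {V E : Type} [Fintype E] (s t : E → V) (Z Z' : Set V) :
    (edg s t (Z \ Z') ((Z ∪ Z')ᶜ)) ∩ (edg s t (Z' \ Z) ((Z ∪ Z')ᶜ)) = ∅ := by
    ext e
    simp only [edg, mem_inter_iff, mem_setOf_eq, mem_diff,
      mem_compl_iff, mem_union, mem_empty_iff_false, iff_false]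
    by_cases h1 : s e ∈ Z <;> by_cases h2 : s e ∈ Z' <;>
      by_cases h3 : t e ∈ Z <;> by_cases h4 : t e ∈ Z' <;> simp_all

/-- Lemma 4.4 (i): if `Z, Z'` are 3-tails with `Z ∧ Z'` nonempty and
`Z ∪ Z' ≠ C`, and exactly two edges of `Term_{Z'}` lie in `Z` (both endpoints
in `Z`), then `k_{Z∪Z'} ∈ {2, 3}`. -/
theorem stmt_10 {V E : Type} [Fintype V] [Fintype E] (s t : E → V)
    (hC : ConnOn s t Set.univ) (Z Z' : Set V)
    (hZ : IsTail s t Z) (hZ' : IsTail s t Z')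
    (hkZ : kcut s t Z = 3) (hkZ' : kcut s t Z' = 3)
    (hne : (Z ∩ Z').Nonempty) (hun : Z ∪ Z' ≠ Set.univ)
    (h2 : ({e ∈ TermPts s t Z' | s e ∈ Z ∧ t e ∈ Z}).ncard = 2) :
    kcut s t (Z ∪ Z') ∈ ({2, 3} : Set ℕ) := by
  classical
  obtain ⟨-, hZconn, hZcconn⟩ := hZ
  obtain ⟨-, hZ'conn, hZ'cconn⟩ := hZ'
  -- blocks
  have hWne : ((Z ∪ Z')ᶜ).Nonempty := Set.nonempty_compl.mpr hun
  -- decompositions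
  have hT1 := aux_hT1 s t Z Z'
  have hT2 := aux_hT2 s t Z Z'
  have hT3 := aux_hT3 s t Z Z'
  have hT4 := aux_hT4 s t Z Z'
  -- disjointness
  have d1 := aux_d1 s t Z Z'
  have d2 := aux_d2 s t Z Z'
  have d3 := aux_d3 s t Z Z'
  have d4 := aux_d4 s t Z Z'
  have d5 := aux_d5 s t Z Z'
  have d6 := aux_d6 s t Z Z'
  have d7 := aux_d7 s t Z Z'
  have d8 := aux_d8 s t Z Z'
  have d9 := aux_d9 s t Z Z'
  have d10 := aux_d10 s t Z Z'
  have d11 := aux_d11 s t Z Z'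
  have d12 := aux_d12 s t Z Z'
  -- counting equations
  have e1 : (edg s t (Z \ Z') (Z' \ Z)).ncard + (edg s t (Z \ Z') ((Z ∪ Z')ᶜ)).ncard + (edg s t (Z ∩ Z') (Z' \ Z)).ncard + (edg s t (Z ∩ Z') ((Z ∪ Z')ᶜ)).ncard = 3 := by
    rw [← ncard4 d1 d2 d3 d4 d5 d6, ← hT1]; exact hkZ
  have e2 : (edg s t (Z \ Z') (Z ∩ Z')).ncard + (edg s t (Z \ Z') (Z' \ Z)).ncard + (edg s t (Z ∩ Z') ((Z ∪ Z')ᶜ)).ncard + (edg s t (Z' \ Z) ((Z ∪ Z')ᶜ)).ncard = 3 := by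
    rw [← ncard4 d7 d8 d9 d3 d10 d11, ← hT2]; exact hkZ'
  have e3 : (edg s t (Z \ Z') (Z ∩ Z')).ncard = 2 := by rw [← hT4]; exact h2
  have e4 : kcut s t (Z ∪ Z') = (edg s t (Z \ Z') ((Z ∪ Z')ᶜ)).ncard + (edg s t (Z ∩ Z') ((Z ∪ Z')ᶜ)).ncard + (edg s t (Z' \ Z) ((Z ∪ Z')ᶜ)).ncard := by
    show (TermPts s t (Z ∪ Z')).ncard = _
    rw [hT3, ncard3 d5 d12 d11]
  -- A is nonempty
  have hAne : (Z \ Z').Nonempty := by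
    have : (edg s t (Z \ Z') (Z ∩ Z')).Nonempty := by
      rw [← Set.ncard_pos (edg s t (Z \ Z') (Z ∩ Z')).toFinite, e3]; norm_num
    obtain ⟨e, he⟩ := this
    rcases he with ⟨h, -⟩ | ⟨-, h⟩
    exacts [⟨s e, h⟩, ⟨t e, h⟩]
  -- fact: (edg s t (Z \ Z') ((Z ∪ Z')ᶜ)) is nonempty
  have hAW : 1 ≤ (edg s t (Z \ Z') ((Z ∪ Z')ᶜ)).ncard := by
    obtain ⟨a, ha⟩ := hAne
    obtain ⟨w, hw⟩ := hWne
    have haU : a ∈ Z'ᶜ := ha.2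
    have hwU : w ∈ Z'ᶜ := fun h => hw (Or.inr h)
    obtain ⟨e, hsU, htU, he⟩ := cross_edge s t hZ'cconn haU hwU ha.1
      (fun h => hw (Or.inl h))
    refine (Set.ncard_pos (Set.toFinite _)).mpr ⟨e, ?_⟩
    simp only [mem_compl_iff] at hsU htU
    simp only [edg, mem_setOf_eq, mem_diff, mem_compl_iff, mem_union]
    tauto
  by_cases hDne : (Z' \ Z).Nonempty
  · -- D nonempty: (edg s t (Z ∩ Z') (Z' \ Z)) and (edg s t (Z' \ Z) ((Z ∪ Z')ᶜ)) nonempty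
    obtain ⟨dd, hd⟩ := hDne
    obtain ⟨b, hb⟩ := hne
    have hBD : 1 ≤ (edg s t (Z ∩ Z') (Z' \ Z)).ncard := by
      obtain ⟨e, hsU, htU, he⟩ := cross_edge s t hZ'conn hb.2 hd.1 hb.1 hd.2
      refine (Set.ncard_pos (Set.toFinite _)).mpr ⟨e, ?_⟩
      simp only [edg, mem_setOf_eq, mem_diff, mem_inter_iff]
      tauto
    have hDW : 1 ≤ (edg s t (Z' \ Z) ((Z ∪ Z')ᶜ)).ncard := by
      obtain ⟨w, hw⟩ := hWne
      have hdU : dd ∈ Zᶜ := hd.2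
      have hwU : w ∈ Zᶜ := fun h => hw (Or.inl h)
      obtain ⟨e, hsU, htU, he⟩ := cross_edge s t hZcconn hdU hwU hd.1
        (fun h => hw (Or.inr h))
      refine (Set.ncard_pos (Set.toFinite _)).mpr ⟨e, ?_⟩
      simp only [mem_compl_iff] at hsU htU
      simp only [edg, mem_setOf_eq, mem_diff, mem_compl_iff, mem_union]
      tauto
    rw [e4]
    simp only [Set.mem_insert_iff, Set.mem_singleton_iff]
    omega
  · -- D empty
    rw [Set.not_nonempty_iff_eq_empty] at hDne
    have z1 : (edg s t (Z \ Z') (Z' \ Z)).ncard = 0 := by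
      have : (edg s t (Z \ Z') (Z' \ Z)) = ∅ := by
        ext e; simp [edg, hDne]
      rw [this, Set.ncard_empty]
    have z2 : (edg s t (Z ∩ Z') (Z' \ Z)).ncard = 0 := by
      have : (edg s t (Z ∩ Z') (Z' \ Z)) = ∅ := by
        ext e; simp [edg, hDne]
      rw [this, Set.ncard_empty]
    have z3 : (edg s t (Z' \ Z) ((Z ∪ Z')ᶜ)).ncard = 0 := by
      have : (edg s t (Z' \ Z) ((Z ∪ Z')ᶜ)) = ∅ := by
        ext e; simp [edg, hDne]
      rw [this, Set.ncard_empty]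
    rw [e4]
    simp only [Set.mem_insert_iff, Set.mem_singleton_iff]
    omega
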